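/- The downweighting function x B''(x) = (1/γ) x^{1+β} log(1 + γ/x) is strictly increasing on (0, ∞), for 0 < β ≤ 1 and 0 < γ ≤ 1. -/

import Mathlib

open Real Set

lemma gdef_deriv (γ : ℝ) (hγ0 : 0 < γ) {x : ℝ} (hx : 0 < x) :
    HasDerivAt (fun x : ℝ => x * (Real.log (x + γ) - Real.log x))
      ((Real.log (x + γ) - Real.log x) + x * (1 / (x + γ) - 1 / x)) x := by
  have hxγ : 0 < x + γ := by linarith
  have h1 : HasDerivAt (fun x : ℝ => Real.log (x + γ)) (1 / (x + γ)) x := by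
    have := (Real.hasDerivAt_log hxγ.ne').comp x
      ((hasDerivAt_id x).add_const γ)
    simpa [one_div, Function.comp_def] using this
  have h2 : HasDerivAt (fun x : ℝ => Real.log x) (1 / x) x := by
    simpa [one_div] using Real.hasDerivAt_log hx.ne'
  have := (hasDerivAt_id x).mul (h1.sub h2)
  simpa [mul_comm, add_comm, Pi.mul_def, Pi.sub_def, id] using this

lemma gdef_deriv_pos (γ : ℝ) (hγ0 : 0 < γ) {x : ℝ} (hx : 0 < x) :
    0 < (Real.log (x + γ) - Real.log x) + x * (1 / (x + γ) - 1 / x) := by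
  have hxγ : 0 < x + γ := by linarith
  have hkey : Real.log (x / (x + γ)) < x / (x + γ) - 1 := by
    apply Real.log_lt_sub_one_of_pos (by positivity)
    intro h
    have := (div_eq_one_iff_eq hxγ.ne').mp h
    linarith
  rw [Real.log_div hx.ne' hxγ.ne'] at hkey
  have hx1 : x * (1 / (x + γ) - 1 / x) = x / (x + γ) - 1 := by
    field_simp
  rw [hx1]; linarith

lemma g_strictMono (γ : ℝ) (hγ0 : 0 < γ) :
    StrictMonoOn (fun x : ℝ => x * (Real.log (x + γ) - Real.log x)) (Set.Ioi 0) := by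
  apply strictMonoOn_of_deriv_pos (convex_Ioi 0)
  · intro x hx
    exact ((gdef_deriv γ hγ0 hx).continuousAt).continuousWithinAt
  · intro x hx
    rw [interior_Ioi] at hx
    rw [(gdef_deriv γ hγ0 hx).deriv]
    exact gdef_deriv_pos γ hγ0 hx

theorem stmt_1 (β γ : ℝ) (hβ0 : 0 < β) (hβ1 : β ≤ 1) (hγ0 : 0 < γ) (hγ1 : γ ≤ 1) :
    StrictMonoOn (fun x : ℝ => (1 / γ) * x ^ (1 + β) * Real.log (1 + γ / x))
      (Set.Ioi (0 : ℝ)) := by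
  have hrw : ∀ x ∈ Set.Ioi (0 : ℝ),
      (1 / γ) * x ^ (1 + β) * Real.log (1 + γ / x)
        = (1 / γ) * (x ^ β * (x * (Real.log (x + γ) - Real.log x))) := by
    intro x hx
    rw [Set.mem_Ioi] at hx
    have hxγ : 0 < x + γ := by linarith
    have h1 : (1 : ℝ) + γ / x = (x + γ) / x := by field_simp
    rw [h1, Real.log_div hxγ.ne' hx.ne', Real.rpow_add hx, Real.rpow_one]
    ring
  intro a ha b hb hab
  simp only
  rw [hrw a ha, hrw b hb]
  rw [Set.mem_Ioi] at ha hb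
  have hg := g_strictMono γ hγ0 (Set.mem_Ioi.mpr ha) (Set.mem_Ioi.mpr hb) hab
  have hga : 0 < a * (Real.log (a + γ) - Real.log a) := by
    have : Real.log a < Real.log (a + γ) := Real.log_lt_log ha (by linarith)
    have := sub_pos.mpr this
    positivity
  have hrp : a ^ β < b ^ β := Real.rpow_lt_rpow ha.le hab hβ0
  have hrpa : 0 < a ^ β := Real.rpow_pos_of_pos ha β
  have : a ^ β * (a * (Real.log (a + γ) - Real.log a))
      < b ^ β * (b * (Real.log (b + γ) - Real.log b)) :=
    mul_lt_mul hrp hg.le hga (by positivity)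
  have hγ' : (0 : ℝ) < 1 / γ := by positivity
  exact mul_lt_mul_of_pos_left this hγ'
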